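/- (Johnson–Lindenstrauss) For every ε with 0 < ε < 1 and every finite set of n points x_1,…,x_n in ℝ^d, there exist a dimension r with r ≤ C·log(n)/ε² for an absolute constant C, and a linear map R : ℝ^d → ℝ^r, such that for all pairs i, j: (1−ε)·‖x_i − x_j‖₂ ≤ ‖R(x_i) − R(x_j)‖₂ ≤ (1+ε)·‖x_i − x_j‖₂. -/

import Mathlib

open Finset Real MeasureTheory

set_option maxHeartbeats 1600000

namespace JL

/-- A Rademacher sign: `±1` according to a Boolean. -/
noncomputable def sgn (b : Bool) : ℝ := if b then 1 else -1

/-- The Rademacher average `∑ i, ±v i` determined by a sign pattern `τ`. -/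
noncomputable def Y {d : ℕ} (v : Fin d → ℝ) (τ : Fin d → Bool) : ℝ := ∑ i, sgn (τ i) * v i

/-- The (unnormalized) squared image length `∑ k, (Y v (σ k))²`. -/
noncomputable def W {r d : ℕ} (u : Fin d → ℝ) (σ : Fin r → Fin d → Bool) : ℝ :=
  ∑ k, (Y u (σ k)) ^ 2

lemma integrable_kernel (m : ℝ) : Integrable (fun x : ℝ => exp (m * x - x ^ 2 / 2)) := by
  have h : (fun x : ℝ => exp (m * x - x ^ 2 / 2))
      = fun x : ℝ => exp (m ^ 2 / 2) * exp (-(1/2) * (x - m) ^ 2) := by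
    funext x; rw [← Real.exp_add]; ring_nf
  rw [h]
  exact ((integrable_exp_neg_mul_sq (by norm_num : (0:ℝ) < 1/2)).comp_sub_right m).const_mul _

lemma gauss_shift (m : ℝ) :
    ∫ x : ℝ, exp (m * x - x ^ 2 / 2) = Real.sqrt (2 * π) * exp (m ^ 2 / 2) := by
  have h : (fun x : ℝ => exp (m * x - x ^ 2 / 2))
      = fun x : ℝ => exp (m ^ 2 / 2) * exp (-(1/2) * (x - m) ^ 2) := by
    funext x; rw [← Real.exp_add]; ring_nf
  rw [h, integral_const_mul]
  rw [integral_sub_right_eq_self (fun x : ℝ => exp (-(1/2) * x ^ 2)) m]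
  rw [integral_gaussian]
  rw [mul_comm]
  congr 1
  rw [div_div_eq_mul_div, div_one]
  ring_nf

/-- MGF bound for a Rademacher average of a unit vector. -/
lemma sum_exp_mul_sq_le {d : ℕ} (u : Fin d → ℝ) (hu : ∑ i, (u i) ^ 2 = 1)
    {t : ℝ} (ht0 : 0 ≤ t) (ht : t ≤ 1 / 4) :
    ∑ τ : Fin d → Bool, exp (t * (Y u τ) ^ 2) ≤ 2 ^ d * exp (t + 4 * t ^ 2) := by
  set c : ℝ := Real.sqrt (2 * t) with hc
  have hc2 : c ^ 2 = 2 * t := Real.sq_sqrt (by linarith)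
  have h2π : (0:ℝ) < 2 * π := by positivity
  -- step 1 : pointwise Gaussian representation
  have hrep : ∀ τ : Fin d → Bool, exp (t * (Y u τ) ^ 2)
      = (Real.sqrt (2 * π))⁻¹ * ∫ x : ℝ, exp ((c * Y u τ) * x - x ^ 2 / 2) := by
    intro τ
    rw [gauss_shift (c * Y u τ)]
    rw [inv_mul_cancel_left₀ (by positivity)]
    congr 1
    rw [mul_pow, hc2]; ring
  calc ∑ τ : Fin d → Bool, exp (t * (Y u τ) ^ 2)
      = (Real.sqrt (2 * π))⁻¹ * ∑ τ : Fin d → Bool, ∫ x : ℝ, exp ((c * Y u τ) * x - x ^ 2 / 2) := by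
        rw [Finset.mul_sum]; exact Finset.sum_congr rfl fun τ _ => hrep τ
    _ = (Real.sqrt (2 * π))⁻¹ * ∫ x : ℝ, ∑ τ : Fin d → Bool, exp ((c * Y u τ) * x - x ^ 2 / 2) := by
        rw [integral_finset_sum _ (fun τ _ => integrable_kernel _)]
    _ ≤ (Real.sqrt (2 * π))⁻¹ * ∫ x : ℝ, (2:ℝ) ^ d * exp (-(1/2 - t) * x ^ 2) := by
        apply mul_le_mul_of_nonneg_left _ (by positivity)
        apply integral_mono (integrable_finset_sum _ fun τ _ => integrable_kernel _)
          ((integrable_exp_neg_mul_sq (by linarith : (0:ℝ) < 1/2 - t)).const_mul _)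
        intro x
        -- pointwise bound
        have key : ∑ τ : Fin d → Bool, exp ((c * Y u τ) * x)
            ≤ 2 ^ d * exp (t * x ^ 2) := by
          have hexpand : ∀ τ : Fin d → Bool,
              exp ((c * Y u τ) * x) = ∏ i, exp (c * x * u i * sgn (τ i)) := by
            intro τ
            rw [← Real.exp_sum]
            congr 1
            rw [Y, Finset.mul_sum, Finset.sum_mul]
            exact Finset.sum_congr rfl fun i _ => by ring
          calc ∑ τ : Fin d → Bool, exp ((c * Y u τ) * x)
              = ∑ τ : Fin d → Bool, ∏ i, exp (c * x * u i * sgn (τ i)) :=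
                Finset.sum_congr rfl fun τ _ => hexpand τ
            _ = ∏ i, (exp (c * x * u i * sgn true) + exp (c * x * u i * sgn false)) := by
                rw [← Fintype.piFinset_univ]
                rw [Finset.sum_prod_piFinset (univ : Finset Bool)
                  (fun i b => exp (c * x * u i * sgn b))]
                exact Finset.prod_congr rfl fun i _ => by
                  rw [Fintype.sum_bool]
            _ ≤ ∏ i, 2 * exp ((c * x * u i) ^ 2 / 2) := by
                apply Finset.prod_le_prod (fun i _ => by positivity)
                intro i _
                have := Real.cosh_le_exp_half_sq (c * x * u i)
                rw [Real.cosh_eq] at this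
                simp only [sgn]
                norm_num
                linarith
            _ = 2 ^ d * exp (∑ i, (c * x * u i) ^ 2 / 2) := by
                rw [Finset.prod_mul_distrib, Finset.prod_const, Real.exp_sum]
                simp
            _ = 2 ^ d * exp (t * x ^ 2) := by
                congr 2
                rw [← Finset.sum_div]
                have : ∑ i, (c * x * u i) ^ 2 = c ^ 2 * x ^ 2 * ∑ i, (u i) ^ 2 := by
                  rw [Finset.mul_sum]; exact Finset.sum_congr rfl fun i _ => by ring
                rw [this, hu, hc2]; ring
        calc ∑ τ : Fin d → Bool, exp ((c * Y u τ) * x - x ^ 2 / 2)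
            = (∑ τ : Fin d → Bool, exp ((c * Y u τ) * x)) * exp (-(x ^ 2 / 2)) := by
              rw [Finset.sum_mul]
              exact Finset.sum_congr rfl fun τ _ => by rw [← Real.exp_add]; ring_nf
          _ ≤ (2 ^ d * exp (t * x ^ 2)) * exp (-(x ^ 2 / 2)) := by
              apply mul_le_mul_of_nonneg_right key (Real.exp_nonneg _)
          _ = 2 ^ d * exp (-(1/2 - t) * x ^ 2) := by
              rw [mul_assoc, ← Real.exp_add]; ring_nf
    _ = (Real.sqrt (2 * π))⁻¹ * (2 ^ d * Real.sqrt (π / (1/2 - t))) := by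
        rw [integral_const_mul, integral_gaussian]
    _ ≤ 2 ^ d * exp (t + 4 * t ^ 2) := by
        -- √(π/(1/2-t)) / √(2π) = 1/√(1-2t) ≤ exp(t+4t²)
        have h1 : (Real.sqrt (2 * π))⁻¹ * Real.sqrt (π / (1/2 - t)) = (Real.sqrt (1 - 2*t))⁻¹ := by
          rw [← Real.sqrt_inv (2 * π), ← Real.sqrt_mul (by positivity), ← Real.sqrt_inv (1 - 2*t)]
          congr 1
          have hπ : (0:ℝ) < π := Real.pi_pos
          have hd : (1:ℝ)/2 - t ≠ 0 := by linarith
          have hd2 : (1:ℝ) - 2*t ≠ 0 := by intro h; apply hd; linarith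
          field_simp
          all_goals exact Or.inl (by ring)
        have h2 : (Real.sqrt (1 - 2*t))⁻¹ ≤ exp (t + 4 * t ^ 2) := by
          have hpos : (0:ℝ) < 1 + (2*t + 8*t^2) := by nlinarith
          have hlb : exp (-(t + 4 * t ^ 2)) ≤ Real.sqrt (1 - 2*t) := by
            rw [Real.le_sqrt (Real.exp_nonneg _) (by linarith)]
            have hsq : exp (-(t + 4 * t ^ 2)) ^ 2 = exp (-(2*t + 8*t^2)) := by
              rw [sq, ← Real.exp_add]; ring_nf
            rw [hsq, Real.exp_neg]
            have h3 : (1:ℝ) + (2*t + 8*t^2) ≤ exp (2*t + 8*t^2) := by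
              have := Real.add_one_le_exp (2*t + 8*t^2); linarith
            have h4 : (exp (2*t + 8*t^2))⁻¹ ≤ (1 + (2*t + 8*t^2))⁻¹ :=
              inv_anti₀ hpos h3
            have h5 : (1 + (2*t + 8*t^2))⁻¹ ≤ 1 - 2*t := by
              rw [inv_eq_one_div, div_le_iff₀ hpos]; nlinarith
            linarith
          calc (Real.sqrt (1 - 2*t))⁻¹ ≤ (exp (-(t + 4 * t ^ 2)))⁻¹ :=
                inv_anti₀ (Real.exp_pos _) hlb
            _ = exp (t + 4 * t ^ 2) := by rw [← Real.exp_neg, neg_neg]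
        calc (Real.sqrt (2 * π))⁻¹ * (2 ^ d * Real.sqrt (π / (1/2 - t)))
            = 2 ^ d * ((Real.sqrt (2 * π))⁻¹ * Real.sqrt (π / (1/2 - t))) := by ring
          _ = 2 ^ d * (Real.sqrt (1 - 2*t))⁻¹ := by rw [h1]
          _ ≤ 2 ^ d * exp (t + 4 * t ^ 2) := by
              apply mul_le_mul_of_nonneg_left h2 (by positivity)

lemma card_bool_fun (d : ℕ) : (Fintype.card (Fin d → Bool)) = 2 ^ d := by simp

lemma sum_split {d : ℕ} (F : (Fin (d+1) → Bool) → ℝ) :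
    ∑ τ : Fin (d+1) → Bool, F τ = ∑ b : Bool, ∑ τ : Fin d → Bool, F (Fin.cons b τ) := by
  rw [← Equiv.sum_comp (Fin.consEquiv (fun _ => Bool)) F, Fintype.sum_prod_type]
  rfl

lemma Y_cons {d : ℕ} (v : Fin (d+1) → ℝ) (b : Bool) (τ : Fin d → Bool) :
    Y v (Fin.cons b τ) = sgn b * v 0 + Y (fun i => v i.succ) τ := by
  rw [Y, Fin.sum_univ_succ]
  simp [Y]

lemma sgn_true : sgn true = 1 := rfl
lemma sgn_false : sgn false = -1 := rfl

lemma sum_Y_sq (d : ℕ) (v : Fin d → ℝ) :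
    ∑ τ : Fin d → Bool, (Y v τ) ^ 2 = 2 ^ d * ∑ i, (v i) ^ 2 := by
  induction d with
  | zero => simp [Y]
  | succ d ih =>
      rw [sum_split (fun τ => (Y v τ) ^ 2)]
      simp only [Fintype.sum_bool, Y_cons, sgn_true, sgn_false]
      rw [← Finset.sum_add_distrib]
      have step : ∑ τ : Fin d → Bool, ((1 * v 0 + Y (fun i => v i.succ) τ) ^ 2
              + ((-1) * v 0 + Y (fun i => v i.succ) τ) ^ 2)
          = ∑ τ : Fin d → Bool, (2 * (Y (fun i => v i.succ) τ) ^ 2 + 2 * (v 0) ^ 2) :=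
        Finset.sum_congr rfl fun τ _ => by ring
      rw [step, Finset.sum_add_distrib, ← Finset.mul_sum, ih, Finset.sum_const,
        Finset.card_univ, card_bool_fun, nsmul_eq_mul, Fin.sum_univ_succ]
      push_cast
      ring

lemma sum_Y_four (d : ℕ) (v : Fin d → ℝ) :
    ∑ τ : Fin d → Bool, (Y v τ) ^ 4 ≤ 2 ^ d * (3 * (∑ i, (v i) ^ 2) ^ 2) := by
  induction d with
  | zero => simp [Y]
  | succ d ih =>
      rw [sum_split (fun τ => (Y v τ) ^ 4)]
      simp only [Fintype.sum_bool, Y_cons, sgn_true, sgn_false]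
      rw [← Finset.sum_add_distrib]
      have step : ∑ τ : Fin d → Bool, ((1 * v 0 + Y (fun i => v i.succ) τ) ^ 4
              + ((-1) * v 0 + Y (fun i => v i.succ) τ) ^ 4)
          = ∑ τ : Fin d → Bool, (2 * (Y (fun i => v i.succ) τ) ^ 4
              + (12 * (v 0) ^ 2 * (Y (fun i => v i.succ) τ) ^ 2 + 2 * (v 0) ^ 4)) :=
        Finset.sum_congr rfl fun τ _ => by ring
      rw [step, Finset.sum_add_distrib, Finset.sum_add_distrib, ← Finset.mul_sum,
        ← Finset.mul_sum, sum_Y_sq, Finset.sum_const, Finset.card_univ, card_bool_fun,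
        nsmul_eq_mul, Fin.sum_univ_succ]
      have hm : (0:ℝ) ≤ ∑ i : Fin d, (v i.succ) ^ 2 :=
        Finset.sum_nonneg fun i _ => sq_nonneg _
      have h2 : (0:ℝ) < 2 ^ d := by positivity
      have ih' := ih (fun i => v i.succ)
      push_cast
      have h3 : (2:ℝ) ^ (d+1) = 2 * 2 ^ d := by ring
      nlinarith [sq_nonneg (v 0), mul_nonneg (le_of_lt h2) hm,
        mul_nonneg (sq_nonneg (v 0)) hm, mul_nonneg (le_of_lt h2) (sq_nonneg (v 0)),
        mul_pos h2 (mul_pos (by norm_num : (0:ℝ) < 1) (by norm_num : (0:ℝ) < 1))]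


lemma markov {Ω : Type*} [Fintype Ω] [DecidableEq Ω] (f : Ω → ℝ) (hf : ∀ σ, 0 ≤ f σ)
    {a : ℝ} (ha : 0 < a) (p : Ω → Prop) [DecidablePred p] (hp : ∀ σ, p σ → a ≤ f σ) :
    ((univ.filter p).card : ℝ) ≤ (∑ σ, f σ) / a := by
  rw [le_div_iff₀ ha]
  calc ((univ.filter p).card : ℝ) * a = ∑ _σ ∈ univ.filter p, a := by
        rw [Finset.sum_const, nsmul_eq_mul]
    _ ≤ ∑ σ ∈ univ.filter p, f σ :=
        Finset.sum_le_sum fun σ hσ => hp σ (Finset.mem_filter.mp hσ).2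
    _ ≤ ∑ σ, f σ :=
        Finset.sum_le_sum_of_subset_of_nonneg (Finset.subset_univ _) fun i _ _ => hf i

lemma sum_prod_r (r d : ℕ) (g : (Fin d → Bool) → ℝ) :
    ∑ σ : Fin r → Fin d → Bool, ∏ k, g (σ k) = (∑ τ : Fin d → Bool, g τ) ^ r := by
  rw [← Fintype.piFinset_univ, Finset.sum_prod_piFinset (univ : Finset (Fin d → Bool))
    (fun _ τ => g τ), Finset.prod_const, Finset.card_univ, Fintype.card_fin]

lemma exp_neg_le {z : ℝ} (hz : 0 ≤ z) : exp (-z) ≤ 1 - z + z ^ 2 := by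
  have h1 : 1 + z ≤ exp z := by have := Real.add_one_le_exp z; linarith
  have hpos : (0:ℝ) < 1 + z := by linarith
  have h2 : exp (-z) ≤ (1 + z)⁻¹ := by
    rw [Real.exp_neg]
    exact inv_anti₀ hpos h1
  have h3 : (1 + z)⁻¹ ≤ 1 - z + z ^ 2 := by
    rw [inv_eq_one_div, div_le_iff₀ hpos]; nlinarith
  linarith

lemma sum_exp_neg_le {d : ℕ} (u : Fin d → ℝ) (hu : ∑ i, (u i) ^ 2 = 1)
    {t : ℝ} (ht0 : 0 ≤ t) :
    ∑ τ : Fin d → Bool, exp (-(t * (Y u τ) ^ 2)) ≤ 2 ^ d * exp (-t + 3 * t ^ 2) := by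
  calc ∑ τ : Fin d → Bool, exp (-(t * (Y u τ) ^ 2))
      ≤ ∑ τ : Fin d → Bool, (1 - t * (Y u τ) ^ 2 + t ^ 2 * (Y u τ) ^ 4) := by
        apply Finset.sum_le_sum
        intro τ _
        have := exp_neg_le (mul_nonneg ht0 (sq_nonneg (Y u τ)))
        calc exp (-(t * (Y u τ) ^ 2)) ≤ 1 - t * (Y u τ) ^ 2 + (t * (Y u τ) ^ 2) ^ 2 := this
          _ = 1 - t * (Y u τ) ^ 2 + t ^ 2 * (Y u τ) ^ 4 := by ring
    _ ≤ 2 ^ d * exp (-t + 3 * t ^ 2) := by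
        rw [Finset.sum_add_distrib, Finset.sum_sub_distrib, ← Finset.mul_sum, ← Finset.mul_sum,
          sum_Y_sq, hu, Finset.sum_const, Finset.card_univ]
        have hY4 := sum_Y_four d u
        rw [hu] at hY4
        have hexp : (1:ℝ) + (-t + 3 * t ^ 2) ≤ exp (-t + 3 * t ^ 2) := by
          have := Real.add_one_le_exp (-t + 3 * t ^ 2); linarith
        have hc : ((Fintype.card (Fin d → Bool) : ℝ)) = 2 ^ d := by simp
        rw [nsmul_eq_mul, hc]
        have h2 : (0:ℝ) < 2 ^ d := by positivity
        nlinarith [sq_nonneg t, mul_nonneg (sq_nonneg t) (le_of_lt h2)]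


lemma sum_exp_W (r d : ℕ) (u : Fin d → ℝ) (t : ℝ) :
    ∑ σ : Fin r → Fin d → Bool, exp (t * W u σ)
      = (∑ τ : Fin d → Bool, exp (t * (Y u τ) ^ 2)) ^ r := by
  rw [← sum_prod_r r d (fun τ => exp (t * (Y u τ) ^ 2))]
  apply Finset.sum_congr rfl
  intro σ _
  rw [← Real.exp_sum, W, Finset.mul_sum]

lemma upper_count (r d : ℕ) {ε : ℝ} (hε0 : 0 < ε) (hε1 : ε < 1) (u : Fin d → ℝ)
    (hu : ∑ i, (u i) ^ 2 = 1) :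
    ((univ.filter fun σ : Fin r → Fin d → Bool => (1 + ε) * r < W u σ).card : ℝ)
      ≤ ((2:ℝ) ^ d) ^ r * exp (-(r * ε ^ 2) / 16) := by
  set t : ℝ := ε / 8 with hts
  have ht0 : 0 ≤ t := by positivity
  have ht4 : t ≤ 1 / 4 := by rw [hts]; linarith
  have hmark := markov (fun σ : Fin r → Fin d → Bool => exp (t * W u σ))
    (fun σ => Real.exp_nonneg _) (Real.exp_pos (t * ((1 + ε) * r)))
    (fun σ => (1 + ε) * r < W u σ)
    (fun σ hσ => Real.exp_le_exp.mpr (by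
      have : (1 + ε) * r ≤ W u σ := le_of_lt hσ
      nlinarith))
  refine le_trans hmark ?_
  rw [sum_exp_W, div_eq_mul_inv, ← Real.exp_neg]
  calc (∑ τ : Fin d → Bool, exp (t * (Y u τ) ^ 2)) ^ r * exp (-(t * ((1 + ε) * r)))
      ≤ ((2:ℝ) ^ d * exp (t + 4 * t ^ 2)) ^ r * exp (-(t * ((1 + ε) * r))) := by
        apply mul_le_mul_of_nonneg_right _ (Real.exp_nonneg _)
        apply pow_le_pow_left₀ (Finset.sum_nonneg fun τ _ => Real.exp_nonneg _)
        exact sum_exp_mul_sq_le u hu ht0 ht4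
    _ = ((2:ℝ) ^ d) ^ r * (exp (r * (t + 4 * t ^ 2)) * exp (-(t * ((1 + ε) * r)))) := by
        rw [mul_pow, ← Real.exp_nat_mul]
        ring_nf
    _ = ((2:ℝ) ^ d) ^ r * exp (r * (4 * t ^ 2 - t * ε)) := by
        rw [← Real.exp_add]
        congr 2
        ring
    _ ≤ ((2:ℝ) ^ d) ^ r * exp (-(r * ε ^ 2) / 16) := by
        apply mul_le_mul_of_nonneg_left _ (by positivity)
        apply Real.exp_le_exp.mpr
        rw [hts]
        have : (0:ℝ) ≤ r := Nat.cast_nonneg r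
        nlinarith [sq_nonneg ε]

lemma lower_count (r d : ℕ) {ε : ℝ} (hε0 : 0 < ε) (hε1 : ε < 1) (u : Fin d → ℝ)
    (hu : ∑ i, (u i) ^ 2 = 1) :
    ((univ.filter fun σ : Fin r → Fin d → Bool => W u σ < (1 - ε) * r).card : ℝ)
      ≤ ((2:ℝ) ^ d) ^ r * exp (-(r * ε ^ 2) / 16) := by
  set t : ℝ := ε / 6 with hts
  have ht0 : 0 ≤ t := by positivity
  have hmark := markov (fun σ : Fin r → Fin d → Bool => exp (-(t * W u σ)))
    (fun σ => Real.exp_nonneg _) (Real.exp_pos (-(t * ((1 - ε) * r))))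
    (fun σ => W u σ < (1 - ε) * r)
    (fun σ hσ => Real.exp_le_exp.mpr (by nlinarith [le_of_lt hσ]))
  refine le_trans hmark ?_
  have hW : ∑ σ : Fin r → Fin d → Bool, exp (-(t * W u σ))
      = (∑ τ : Fin d → Bool, exp (-(t * (Y u τ) ^ 2))) ^ r := by
    rw [← sum_prod_r r d (fun τ => exp (-(t * (Y u τ) ^ 2)))]
    apply Finset.sum_congr rfl
    intro σ _
    rw [← Real.exp_sum, W, Finset.mul_sum]
    congr 1
    rw [← Finset.sum_neg_distrib]
  rw [hW, div_eq_mul_inv, ← Real.exp_neg, neg_neg]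
  calc (∑ τ : Fin d → Bool, exp (-(t * (Y u τ) ^ 2))) ^ r * exp (t * ((1 - ε) * r))
      ≤ ((2:ℝ) ^ d * exp (-t + 3 * t ^ 2)) ^ r * exp (t * ((1 - ε) * r)) := by
        apply mul_le_mul_of_nonneg_right _ (Real.exp_nonneg _)
        apply pow_le_pow_left₀ (Finset.sum_nonneg fun τ _ => Real.exp_nonneg _)
        exact sum_exp_neg_le u hu ht0
    _ = ((2:ℝ) ^ d) ^ r * exp (r * (3 * t ^ 2 - t * ε)) := by
        rw [mul_pow, ← Real.exp_nat_mul, mul_assoc, ← Real.exp_add]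
        congr 2
        ring
    _ ≤ ((2:ℝ) ^ d) ^ r * exp (-(r * ε ^ 2) / 16) := by
        apply mul_le_mul_of_nonneg_left _ (by positivity)
        apply Real.exp_le_exp.mpr
        rw [hts]
        have : (0:ℝ) ≤ r := Nat.cast_nonneg r
        nlinarith [sq_nonneg ε]


/-- The random-projection linear map determined by a sign matrix `σ`. -/
noncomputable def Rmap (r d : ℕ) (σ : Fin r → Fin d → Bool) :
    EuclideanSpace ℝ (Fin d) →ₗ[ℝ] EuclideanSpace ℝ (Fin r) where
  toFun v := WithLp.toLp 2 (fun k => (Real.sqrt r)⁻¹ * ∑ i, sgn (σ k i) * v i)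
  map_add' v w := by
    ext k
    simp only [PiLp.add_apply, PiLp.toLp_apply]
    rw [← mul_add, ← Finset.sum_add_distrib]
    congr 1
    exact Finset.sum_congr rfl fun i _ => by ring
  map_smul' c v := by
    ext k
    simp only [PiLp.smul_apply, PiLp.toLp_apply, RingHom.id_apply, smul_eq_mul]
    rw [Finset.mul_sum, Finset.mul_sum, Finset.mul_sum]
    exact Finset.sum_congr rfl fun i _ => by ring

lemma norm_Rmap_sq (r d : ℕ) (hr : 0 < r) (σ : Fin r → Fin d → Bool)
    (v : EuclideanSpace ℝ (Fin d)) :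
    ‖Rmap r d σ v‖ ^ 2 = (W (fun i => v i) σ) / r := by
  rw [EuclideanSpace.norm_eq, Real.sq_sqrt (Finset.sum_nonneg fun k _ => by positivity)]
  rw [W, Finset.sum_div]
  apply Finset.sum_congr rfl
  intro k _
  have : ‖Rmap r d σ v k‖ = |(Real.sqrt r)⁻¹ * ∑ i, sgn (σ k i) * v i| := by
    rw [Real.norm_eq_abs]; rfl
  rw [this, sq_abs]
  have hrpos : (0:ℝ) < r := by exact_mod_cast hr
  rw [mul_pow, Y]
  rw [sq, ← Real.sqrt_inv, Real.mul_self_sqrt (by positivity)]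
  rw [div_eq_mul_inv, mul_comm]

lemma norm_sq_eq (d : ℕ) (v : EuclideanSpace ℝ (Fin d)) :
    ‖v‖ ^ 2 = ∑ i, (v i) ^ 2 := by
  rw [EuclideanSpace.norm_eq, Real.sq_sqrt (Finset.sum_nonneg fun i _ => by positivity)]
  exact Finset.sum_congr rfl fun i _ => by rw [Real.norm_eq_abs, sq_abs]

lemma Y_smul {d : ℕ} (c : ℝ) (v : Fin d → ℝ) (τ : Fin d → Bool) :
    Y (fun i => c * v i) τ = c * Y v τ := by
  rw [Y, Y, Finset.mul_sum]
  exact Finset.sum_congr rfl fun i _ => by ring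

lemma W_smul {r d : ℕ} (c : ℝ) (v : Fin d → ℝ) (σ : Fin r → Fin d → Bool) :
    W (fun i => c * v i) σ = c ^ 2 * W v σ := by
  rw [W, W, Finset.mul_sum]
  exact Finset.sum_congr rfl fun k _ => by rw [Y_smul]; ring


lemma pair_count (r d : ℕ) {ε : ℝ} (hε0 : 0 < ε) (hε1 : ε < 1) (u : Fin d → ℝ)
    (hu : ∑ i, (u i) ^ 2 = 1)
    (upper : ((univ.filter fun σ : Fin r → Fin d → Bool => (1 + ε) * r < W u σ).card : ℝ)
      ≤ ((2:ℝ) ^ d) ^ r * exp (-(r * ε ^ 2) / 16))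
    (lower : ((univ.filter fun σ : Fin r → Fin d → Bool => W u σ < (1 - ε) * r).card : ℝ)
      ≤ ((2:ℝ) ^ d) ^ r * exp (-(r * ε ^ 2) / 16)) :
    ((univ.filter fun σ : Fin r → Fin d → Bool =>
        ¬((1 - ε) * r ≤ W u σ ∧ W u σ ≤ (1 + ε) * r)).card : ℝ)
      ≤ 2 * (((2:ℝ) ^ d) ^ r * exp (-(r * ε ^ 2) / 16)) := by
  classical
  have hsub : (univ.filter fun σ : Fin r → Fin d → Bool =>
        ¬((1 - ε) * r ≤ W u σ ∧ W u σ ≤ (1 + ε) * r))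
      ⊆ (univ.filter fun σ : Fin r → Fin d → Bool => W u σ < (1 - ε) * r)
        ∪ (univ.filter fun σ : Fin r → Fin d → Bool => (1 + ε) * r < W u σ) := by
    intro σ hσ
    simp only [Finset.mem_filter, Finset.mem_union, Finset.mem_univ, true_and] at *
    rcases not_and_or.mp hσ with h | h
    · exact Or.inl (not_le.mp h)
    · exact Or.inr (not_le.mp h)
  calc ((univ.filter fun σ : Fin r → Fin d → Bool =>
        ¬((1 - ε) * r ≤ W u σ ∧ W u σ ≤ (1 + ε) * r)).card : ℝ)
      ≤ (((univ.filter fun σ : Fin r → Fin d → Bool => W u σ < (1 - ε) * r)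
        ∪ (univ.filter fun σ : Fin r → Fin d → Bool => (1 + ε) * r < W u σ)).card : ℝ) := by
        exact_mod_cast Finset.card_le_card hsub
    _ ≤ ((univ.filter fun σ : Fin r → Fin d → Bool => W u σ < (1 - ε) * r).card : ℝ)
        + ((univ.filter fun σ : Fin r → Fin d → Bool => (1 + ε) * r < W u σ).card : ℝ) := by
        exact_mod_cast Finset.card_union_le _ _
    _ ≤ 2 * (((2:ℝ) ^ d) ^ r * exp (-(r * ε ^ 2) / 16)) := by linarith


end JL

open JL in
/-- Johnson–Lindenstrauss lemma (existential form): there is an absolute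
constant `C` such that for every `0 < ε < 1` and every finite family of `n`
points in `ℝ^d`, some linear map into `ℝ^r` with `r ≤ C·log n / ε²` preserves
all pairwise distances up to a factor `1 ± ε`. -/
theorem johnson_lindenstrauss_existential :
    ∃ C : ℝ, 0 < C ∧
      ∀ (ε : ℝ), 0 < ε → ε < 1 →
        ∀ (n d : ℕ) (x : Fin n → EuclideanSpace ℝ (Fin d)),
          ∃ (r : ℕ) (R : EuclideanSpace ℝ (Fin d) →ₗ[ℝ]
              EuclideanSpace ℝ (Fin r)),
            (r : ℝ) ≤ C * Real.log n / ε ^ 2 ∧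
            ∀ i j : Fin n,
              (1 - ε) * ‖x i - x j‖ ≤ ‖R (x i) - R (x j)‖ ∧
              ‖R (x i) - R (x j)‖ ≤ (1 + ε) * ‖x i - x j‖ := by
  classical
  refine ⟨50, by norm_num, ?_⟩
  intro ε hε0 hε1 n d x
  by_cases hn : n ≤ 1
  · -- trivial case : at most one point
    refine ⟨0, 0, ?_, ?_⟩
    · have hlog : Real.log n = 0 := by
        rcases Nat.le_one_iff_eq_zero_or_eq_one.mp hn with h | h <;> subst h <;> simp
      rw [hlog]
      norm_num
    · intro i j
      have hij : i = j := by
        apply Fin.ext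
        omega
      subst hij
      simp
  · push_neg at hn
    have hn2 : (2:ℝ) ≤ (n:ℝ) := by exact_mod_cast hn
    have hnpos : (0:ℝ) < n := by linarith
    have hlogn : 0 < Real.log n := Real.log_pos (by linarith)
    have hlog2 : Real.log 2 ≤ Real.log n := Real.log_le_log (by norm_num) hn2
    have hlog2' : (0.6931471803 : ℝ) < Real.log 2 := Real.log_two_gt_d9
    have hε2 : (0:ℝ) < ε ^ 2 := by positivity
    set L : ℝ := 48 * Real.log n / ε ^ 2 with hL_def
    have hL0 : 0 ≤ L := by positivity
    set r : ℕ := ⌊L⌋₊ + 1 with hr_def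
    have hrpos : 0 < r := Nat.succ_pos _
    have hrL : L < (r : ℕ) := by
      rw [hr_def]
      push_cast
      exact Nat.lt_floor_add_one L
    have hrle : (r : ℝ) ≤ L + 1 := by
      rw [hr_def]
      push_cast
      have := Nat.floor_le hL0
      linarith
    -- the dimension bound
    have hrbound : (r : ℝ) ≤ 50 * Real.log n / ε ^ 2 := by
      have h1 : (1:ℝ) ≤ 2 * Real.log n / ε ^ 2 := by
        rw [le_div_iff₀ hε2]
        nlinarith
      have : (50:ℝ) * Real.log n / ε ^ 2 = L + 2 * Real.log n / ε ^ 2 := by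
        rw [hL_def]; ring
      linarith
    -- unit difference vectors
    set u : Fin n → Fin n → Fin d → ℝ :=
      fun i j k => ‖x i - x j‖⁻¹ * ((x i - x j) k) with hu_def
    have hu_unit : ∀ i j : Fin n, x i - x j ≠ 0 → ∑ k, (u i j k) ^ 2 = 1 := by
      intro i j hij
      have hnorm : ‖x i - x j‖ ≠ 0 := norm_ne_zero_iff.mpr hij
      have : ∑ k, (u i j k) ^ 2 = ‖x i - x j‖⁻¹ ^ 2 * ∑ k, ((x i - x j) k) ^ 2 := by
        rw [Finset.mul_sum]
        exact Finset.sum_congr rfl fun k _ => by rw [hu_def]; ring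
      rw [this, ← norm_sq_eq]
      field_simp
    -- the bad set
    set Bad : Finset (Fin r → Fin d → Bool) :=
      univ.filter (fun σ => ∃ p : Fin n × Fin n, x p.1 - x p.2 ≠ 0 ∧
        ¬((1 - ε) * r ≤ W (u p.1 p.2) σ ∧ W (u p.1 p.2) σ ≤ (1 + ε) * r)) with hBad_def
    set B : Fin n × Fin n → Finset (Fin r → Fin d → Bool) :=
      fun p => univ.filter (fun σ => x p.1 - x p.2 ≠ 0 ∧
        ¬((1 - ε) * r ≤ W (u p.1 p.2) σ ∧ W (u p.1 p.2) σ ≤ (1 + ε) * r)) with hB_def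
    have hBadsub : Bad ⊆ univ.biUnion B := by
      intro σ hσ
      rw [hBad_def, Finset.mem_filter] at hσ
      obtain ⟨-, p, hp⟩ := hσ
      exact Finset.mem_biUnion.mpr ⟨p, Finset.mem_univ _, by
        rw [hB_def, Finset.mem_filter]; exact ⟨Finset.mem_univ _, hp⟩⟩
    have hBp : ∀ p : Fin n × Fin n,
        ((B p).card : ℝ) ≤ 2 * (((2:ℝ) ^ d) ^ r * exp (-(r * ε ^ 2) / 16)) := by
      intro p
      by_cases hp : x p.1 - x p.2 = 0
      · have : B p = ∅ := by
          rw [hB_def]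
          apply Finset.filter_false_of_mem
          intro σ _
          simp [hp]
        rw [this]
        simp
        positivity
      · have hsub : B p ⊆ univ.filter (fun σ : Fin r → Fin d → Bool =>
            ¬((1 - ε) * r ≤ W (u p.1 p.2) σ ∧ W (u p.1 p.2) σ ≤ (1 + ε) * r)) := by
          intro σ hσ
          rw [hB_def, Finset.mem_filter] at hσ
          exact Finset.mem_filter.mpr ⟨Finset.mem_univ _, hσ.2.2⟩
        calc ((B p).card : ℝ)
            ≤ ((univ.filter (fun σ : Fin r → Fin d → Bool =>
              ¬((1 - ε) * r ≤ W (u p.1 p.2) σ ∧ W (u p.1 p.2) σ ≤ (1 + ε) * r))).card : ℝ) := by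
              exact_mod_cast Finset.card_le_card hsub
          _ ≤ 2 * (((2:ℝ) ^ d) ^ r * exp (-(r * ε ^ 2) / 16)) :=
              pair_count r d hε0 hε1 _ (hu_unit p.1 p.2 hp)
                (upper_count r d hε0 hε1 _ (hu_unit p.1 p.2 hp))
                (lower_count r d hε0 hε1 _ (hu_unit p.1 p.2 hp))
    -- total bad count
    have hBadcard : (Bad.card : ℝ) < (((2:ℝ) ^ d) ^ r) := by
      have h1 : (Bad.card : ℝ) ≤ ∑ p : Fin n × Fin n, ((B p).card : ℝ) := by
        calc (Bad.card : ℝ) ≤ ((univ.biUnion B).card : ℝ) := by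
              exact_mod_cast Finset.card_le_card hBadsub
          _ ≤ ∑ p : Fin n × Fin n, ((B p).card : ℝ) := by
              exact_mod_cast Finset.card_biUnion_le
      have h2 : ∑ p : Fin n × Fin n, ((B p).card : ℝ)
          ≤ (n:ℝ) ^ 2 * (2 * (((2:ℝ) ^ d) ^ r * exp (-(r * ε ^ 2) / 16))) := by
        calc ∑ p : Fin n × Fin n, ((B p).card : ℝ)
            ≤ ∑ _p : Fin n × Fin n, 2 * (((2:ℝ) ^ d) ^ r * exp (-(r * ε ^ 2) / 16)) :=
              Finset.sum_le_sum fun p _ => hBp p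
          _ = (n:ℝ) ^ 2 * (2 * (((2:ℝ) ^ d) ^ r * exp (-(r * ε ^ 2) / 16))) := by
              rw [Finset.sum_const, Finset.card_univ, nsmul_eq_mul]
              simp [Fintype.card_prod]
              ring
      -- the probability is small
      have hsmall : (n:ℝ) ^ 2 * (2 * exp (-(r * ε ^ 2) / 16)) < 1 := by
        have hexp : exp (-(r * ε ^ 2) / 16) < exp (-(Real.log 2 + 2 * Real.log n)) := by
          apply Real.exp_lt_exp.mpr
          have hre : 48 * Real.log n < (r:ℝ) * ε ^ 2 := by
            have := mul_lt_mul_of_pos_right hrL hε2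
            rw [hL_def] at this
            calc 48 * Real.log n = 48 * Real.log n / ε ^ 2 * ε ^ 2 := by field_simp
              _ < (r:ℝ) * ε ^ 2 := this
          nlinarith
        have hval : exp (-(Real.log 2 + 2 * Real.log n)) = (2 * (n:ℝ) ^ 2)⁻¹ := by
          rw [Real.exp_neg, Real.exp_add]
          rw [Real.exp_log (by norm_num : (0:ℝ) < 2)]
          congr 1
          rw [show (2:ℝ) * Real.log n = Real.log n + Real.log n by ring, Real.exp_add,
            Real.exp_log hnpos]
          ring
        rw [hval] at hexp
        have h2n : (0:ℝ) < 2 * (n:ℝ) ^ 2 := by positivity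
        calc (n:ℝ) ^ 2 * (2 * exp (-(r * ε ^ 2) / 16))
            < (n:ℝ) ^ 2 * (2 * (2 * (n:ℝ) ^ 2)⁻¹) := by
              apply mul_lt_mul_of_pos_left _ (by positivity)
              exact mul_lt_mul_of_pos_left hexp (by norm_num)
          _ = 1 := by field_simp
      have hpow : (0:ℝ) < ((2:ℝ) ^ d) ^ r := by positivity
      calc (Bad.card : ℝ) ≤ (n:ℝ) ^ 2 * (2 * (((2:ℝ) ^ d) ^ r * exp (-(r * ε ^ 2) / 16))) := by
            linarith
        _ = ((2:ℝ) ^ d) ^ r * ((n:ℝ) ^ 2 * (2 * exp (-(r * ε ^ 2) / 16))) := by ring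
        _ < ((2:ℝ) ^ d) ^ r * 1 := by
            exact mul_lt_mul_of_pos_left hsmall hpow
        _ = ((2:ℝ) ^ d) ^ r := by ring
    -- find a good sign matrix
    have hcard_univ : ((Finset.univ : Finset (Fin r → Fin d → Bool)).card : ℝ)
        = ((2:ℝ) ^ d) ^ r := by
      rw [Finset.card_univ]
      simp
    have hexists : ∃ σ : Fin r → Fin d → Bool, σ ∉ Bad := by
      by_contra h
      push_neg at h
      have : Bad = univ := Finset.eq_univ_of_forall h
      rw [this, hcard_univ] at hBadcard
      exact lt_irrefl _ hBadcard
    obtain ⟨σ, hσ⟩ := hexists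
    have hgood : ∀ i j : Fin n, x i - x j ≠ 0 →
        ((1 - ε) * r ≤ W (u i j) σ ∧ W (u i j) σ ≤ (1 + ε) * r) := by
      intro i j hij
      by_contra h
      apply hσ
      rw [hBad_def, Finset.mem_filter]
      exact ⟨Finset.mem_univ _, ⟨(i, j), hij, h⟩⟩
    -- construct the linear map
    refine ⟨r, Rmap r d σ, hrbound, ?_⟩
    intro i j
    have hmap : Rmap r d σ (x i) - Rmap r d σ (x j) = Rmap r d σ (x i - x j) :=
      (map_sub _ _ _).symm
    rw [hmap]
    by_cases hv : x i - x j = 0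
    · rw [hv]
      simp
    · set v : EuclideanSpace ℝ (Fin d) := x i - x j with hv_def
      have hWv : W (fun k => v k) σ = ‖v‖ ^ 2 * W (u i j) σ := by
        have hnorm : ‖v‖ ≠ 0 := norm_ne_zero_iff.mpr hv
        have h1 : W (u i j) σ = (‖v‖⁻¹) ^ 2 * W (fun k => v k) σ := by
          rw [← W_smul]
        rw [h1]
        field_simp
      have hRsq : ‖Rmap r d σ v‖ ^ 2 = ‖v‖ ^ 2 * W (u i j) σ / r := by
        rw [norm_Rmap_sq r d hrpos, hWv]
      have hrR : (0:ℝ) < r := by exact_mod_cast hrpos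
      obtain ⟨hWlo, hWhi⟩ := hgood i j hv
      constructor
      · -- lower bound
        have hsq : ((1 - ε) * ‖v‖) ^ 2 ≤ ‖Rmap r d σ v‖ ^ 2 := by
          rw [hRsq]
          have hW1 : (1 - ε) ≤ W (u i j) σ / r := by
            rw [le_div_iff₀ hrR]
            linarith
          have h1ε : (0:ℝ) ≤ 1 - ε := by linarith
          have hvnn : (0:ℝ) ≤ ‖v‖ ^ 2 := sq_nonneg _
          calc ((1 - ε) * ‖v‖) ^ 2 = (1 - ε) ^ 2 * ‖v‖ ^ 2 := by ring
            _ ≤ (1 - ε) * ‖v‖ ^ 2 := by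
                have h12 : (1 - ε) ^ 2 ≤ 1 - ε := by nlinarith
                exact mul_le_mul_of_nonneg_right h12 hvnn
            _ ≤ (W (u i j) σ / r) * ‖v‖ ^ 2 := mul_le_mul_of_nonneg_right hW1 hvnn
            _ = ‖v‖ ^ 2 * W (u i j) σ / r := by rw [div_eq_mul_inv, div_eq_mul_inv]; ring
        have h1ε : (0:ℝ) ≤ (1 - ε) * ‖v‖ := mul_nonneg (by linarith) (norm_nonneg _)
        calc (1 - ε) * ‖v‖ = Real.sqrt (((1 - ε) * ‖v‖) ^ 2) := by
              rw [Real.sqrt_sq h1ε]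
          _ ≤ Real.sqrt (‖Rmap r d σ v‖ ^ 2) := Real.sqrt_le_sqrt hsq
          _ = ‖Rmap r d σ v‖ := Real.sqrt_sq (norm_nonneg _)
      · -- upper bound
        have hsq : ‖Rmap r d σ v‖ ^ 2 ≤ ((1 + ε) * ‖v‖) ^ 2 := by
          rw [hRsq]
          have hW1 : W (u i j) σ / r ≤ (1 + ε) := by
            rw [div_le_iff₀ hrR]
            linarith
          have hvnn : (0:ℝ) ≤ ‖v‖ ^ 2 := sq_nonneg _
          calc ‖v‖ ^ 2 * W (u i j) σ / r = (W (u i j) σ / r) * ‖v‖ ^ 2 := by ring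
            _ ≤ (1 + ε) * ‖v‖ ^ 2 := by nlinarith
            _ ≤ (1 + ε) ^ 2 * ‖v‖ ^ 2 := by nlinarith
            _ = ((1 + ε) * ‖v‖) ^ 2 := by ring
        calc ‖Rmap r d σ v‖ = Real.sqrt (‖Rmap r d σ v‖ ^ 2) :=
              (Real.sqrt_sq (norm_nonneg _)).symm
          _ ≤ Real.sqrt (((1 + ε) * ‖v‖) ^ 2) := Real.sqrt_le_sqrt hsq
          _ = (1 + ε) * ‖v‖ := Real.sqrt_sq (mul_nonneg (by linarith) (norm_nonneg _))
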